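/- Suppose d = 1 and D ⊆ (0, ∞). Assume N, X_1 and N·X_1 are P-integrable, that N and X_1 are P_θ-integrable for P_Θ-almost all θ, and that there exist functions h_1, h_2 : D → ℝ, both monotone nondecreasing or both monotone nonincreasing, with h_1(θ) = ∫_Ω N dP_θ and h_2(θ) = ∫_Ω X_1 dP_θ for P_Θ-almost all θ ∈ D. If moreover σ(N) and σ(X_1) are independent under P_θ for P_Θ-almost all θ, then E_P[N·X_1] ≥ E_P[N] · E_P[X_1]; that is, N and X_1 are nonnegatively correlated under P. If instead one of h_1, h_2 is nondecreasing and the other nonincreasing, then E_P[N·X_1] ≤ E_P[N] · E_P[X_1]. -/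

import Mathlib

open MeasureTheory ProbabilityTheory

/-- Disintegration helper: if `P = μ.bind Pθ`, a nonnegative `P`-integrable function `f`
has `∫ f dP = ∫ h dμ` where `h θ` is a.e. the conditional mean, and `h` is `μ`-integrable. -/
lemma aux_bind_integral {Ω : Type*} [MeasurableSpace Ω] (μ : Measure ℝ)
    (Pθ : ℝ → Measure Ω) (hPθ : Measurable Pθ) (P : Measure Ω) (hbind : P = μ.bind Pθ)
    (f : Ω → ℝ) (hf : Measurable f) (hfnn : ∀ ω, 0 ≤ f ω) (hfint : Integrable f P)
    (h : ℝ → ℝ)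
    (hh : ∀ᵐ θ ∂μ, Integrable f (Pθ θ) ∧ h θ = ∫ ω, f ω ∂(Pθ θ)) :
    Integrable h μ ∧ ∫ θ, h θ ∂μ = ∫ ω, f ω ∂P := by
  have hfE : Measurable fun ω => ENNReal.ofReal (f ω) := ENNReal.measurable_ofReal.comp hf
  set G : ℝ → ENNReal := fun θ => ∫⁻ ω, ENNReal.ofReal (f ω) ∂(Pθ θ) with hG
  have hGmeas : Measurable G := (Measure.measurable_lintegral hfE).comp hPθ
  have hGint : ∫⁻ θ, G θ ∂μ = ∫⁻ ω, ENNReal.ofReal (f ω) ∂P := by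
    rw [hbind, Measure.lintegral_bind hPθ.aemeasurable hfE.aemeasurable]
  have hPfin : ∫⁻ ω, ENNReal.ofReal (f ω) ∂P ≠ ⊤ :=
    (lintegral_ofReal_ne_top_iff_integrable hfint.aestronglyMeasurable
      (Filter.Eventually.of_forall hfnn)).2 hfint
  have hne : ∫⁻ θ, G θ ∂μ ≠ ⊤ := by rw [hGint]; exact hPfin
  have heq : h =ᵐ[μ] fun θ => (G θ).toReal := by
    filter_upwards [hh] with θ hθ
    rw [hθ.2, integral_eq_lintegral_of_nonneg_ae (Filter.Eventually.of_forall hfnn)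
      hf.aestronglyMeasurable]
  constructor
  · exact (integrable_toReal_of_lintegral_ne_top hGmeas.aemeasurable hne).congr heq.symm
  · rw [integral_congr_ae heq,
      integral_toReal hGmeas.aemeasurable (ae_lt_top hGmeas hne), hGint,
      ← integral_eq_lintegral_of_nonneg_ae (Filter.Eventually.of_forall hfnn)
        hf.aestronglyMeasurable]

/-- Integral Chebyshev / correlation inequality on `ℝ`. -/
lemma aux_chebyshev (μ : Measure ℝ) [IsProbabilityMeasure μ] (D : Set ℝ)
    (hDnull : μ Dᶜ = 0)
    (f g : ℝ → ℝ) (hf : Integrable f μ) (hg : Integrable g μ)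
    (hfg : Integrable (fun x => f x * g x) μ)
    (hmono : ∀ x ∈ D, ∀ y ∈ D, 0 ≤ (f x - f y) * (g x - g y)) :
    (∫ x, f x ∂μ) * (∫ x, g x ∂μ) ≤ ∫ x, f x * g x ∂μ := by
  set ν := μ.prod μ with hν
  have I1 : Integrable (fun z : ℝ × ℝ => f z.1 * g z.1) ν := by
    simpa using hfg.mul_prod (integrable_const (1 : ℝ))
  have I2 : Integrable (fun z : ℝ × ℝ => f z.2 * g z.2) ν := by
    simpa using (integrable_const (1 : ℝ)).mul_prod hfg
  have I3 : Integrable (fun z : ℝ × ℝ => f z.1 * g z.2) ν := hf.mul_prod hg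
  have I4 : Integrable (fun z : ℝ × ℝ => f z.2 * g z.1) ν := by
    simpa [mul_comm] using hg.mul_prod hf
  have hKnn : 0 ≤ ∫ z : ℝ × ℝ, (f z.1 - f z.2) * (g z.1 - g z.2) ∂ν := by
    apply integral_nonneg_of_ae
    have hnull : ν {z : ℝ × ℝ | ¬ (z.1 ∈ D ∧ z.2 ∈ D)} = 0 := by
      have hsub : {z : ℝ × ℝ | ¬ (z.1 ∈ D ∧ z.2 ∈ D)} ⊆
          (Dᶜ ×ˢ (Set.univ : Set ℝ)) ∪ ((Set.univ : Set ℝ) ×ˢ Dᶜ) := by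
        rintro ⟨x, y⟩ hz
        by_cases hx : x ∈ D
        · exact Or.inr ⟨trivial, fun hy => hz ⟨hx, hy⟩⟩
        · exact Or.inl ⟨hx, trivial⟩
      refine measure_mono_null hsub (measure_union_null ?_ ?_)
      · rw [hν, Measure.prod_prod, hDnull, zero_mul]
      · rw [hν, Measure.prod_prod, hDnull, mul_zero]
    have hae : ∀ᵐ z ∂ν, z.1 ∈ D ∧ z.2 ∈ D := by
      rw [Filter.eventually_iff, mem_ae_iff]
      exact hnull
    filter_upwards [hae] with z hz
    exact hmono z.1 hz.1 z.2 hz.2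
  have hrw : (fun z : ℝ × ℝ => (f z.1 - f z.2) * (g z.1 - g z.2)) =
      fun z : ℝ × ℝ => (f z.1 * g z.1 + f z.2 * g z.2) - (f z.1 * g z.2 + f z.2 * g z.1) :=
    funext fun z => by ring
  rw [hrw] at hKnn
  have h5 : ∫ z : ℝ × ℝ, ((f z.1 * g z.1 + f z.2 * g z.2)
        - (f z.1 * g z.2 + f z.2 * g z.1)) ∂ν
      = ∫ z : ℝ × ℝ, (f z.1 * g z.1 + f z.2 * g z.2) ∂ν
        - ∫ z : ℝ × ℝ, (f z.1 * g z.2 + f z.2 * g z.1) ∂ν :=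
    integral_sub (I1.add I2) (I3.add I4)
  have h6 : ∫ z : ℝ × ℝ, (f z.1 * g z.1 + f z.2 * g z.2) ∂ν
      = ∫ z : ℝ × ℝ, f z.1 * g z.1 ∂ν + ∫ z : ℝ × ℝ, f z.2 * g z.2 ∂ν :=
    integral_add I1 I2
  have h7 : ∫ z : ℝ × ℝ, (f z.1 * g z.2 + f z.2 * g z.1) ∂ν
      = ∫ z : ℝ × ℝ, f z.1 * g z.2 ∂ν + ∫ z : ℝ × ℝ, f z.2 * g z.1 ∂ν :=
    integral_add I3 I4
  rw [h5, h6, h7] at hKnn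
  have e1 : ∫ z : ℝ × ℝ, f z.1 * g z.1 ∂ν = ∫ x, f x * g x ∂μ := by
    have := integral_prod_mul (μ := μ) (ν := μ) (fun x => f x * g x) (fun _ => (1 : ℝ))
    simpa using this
  have e2 : ∫ z : ℝ × ℝ, f z.2 * g z.2 ∂ν = ∫ x, f x * g x ∂μ := by
    have := integral_prod_mul (μ := μ) (ν := μ) (fun _ => (1 : ℝ)) (fun x => f x * g x)
    simpa using this
  have e3 : ∫ z : ℝ × ℝ, f z.1 * g z.2 ∂ν = (∫ x, f x ∂μ) * ∫ x, g x ∂μ :=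
    integral_prod_mul f g
  have e4 : ∫ z : ℝ × ℝ, f z.2 * g z.1 ∂ν = (∫ x, f x ∂μ) * ∫ x, g x ∂μ := by
    have := integral_prod_mul (μ := μ) (ν := μ) g f
    simpa [mul_comm] using this
  rw [e1, e2, e3, e4] at hKnn
  linarith

/-- If the conditional means `θ ↦ E_{P_θ}[N]` and `θ ↦ E_{P_θ}[X₁]` have
the same monotonicity on `D ⊆ (0, ∞)` (and `N`, `X₁` are conditionally independent), then
`N` and `X₁` are nonnegatively correlated under `P`; with opposite monotonicity they are
nonpositively correlated. -/
theorem claim_number_claim_size_correlation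
    {Ω : Type*} [MeasurableSpace Ω] (P : Measure Ω) [IsProbabilityMeasure P]
    (D : Set ℝ) (hD : MeasurableSet D) (hDpos : D ⊆ Set.Ioi (0 : ℝ))
    (Θ : Ω → ℝ) (hΘ : Measurable Θ) (hΘD : ∀ ω, Θ ω ∈ D)
    (Pθ : ℝ → Measure Ω) (hPθprob : ∀ θ, IsProbabilityMeasure (Pθ θ))
    (hmeas : ∀ E : Set Ω, MeasurableSet E → Measurable fun θ => Pθ θ E)
    (hint : ∀ E : Set Ω, MeasurableSet E → ∫⁻ θ, Pθ θ E ∂(P.map Θ) = P E)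
    (hcons : ∀ B : Set ℝ, MeasurableSet B →
      ∀ᵐ θ ∂((P.map Θ).restrict B), Pθ θ (Θ ⁻¹' B) = 1)
    (N : Ω → ℕ) (hN : Measurable N)
    (X₁ : Ω → ℝ) (hX₁ : Measurable X₁) (hX₁nn : ∀ ω, 0 ≤ X₁ ω)
    (hNint : Integrable (fun ω => (N ω : ℝ)) P)
    (hXint : Integrable X₁ P)
    (hNXint : Integrable (fun ω => (N ω : ℝ) * X₁ ω) P)
    (hNθint : ∀ᵐ θ ∂(P.map Θ), Integrable (fun ω => (N ω : ℝ)) (Pθ θ))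
    (hXθint : ∀ᵐ θ ∂(P.map Θ), Integrable X₁ (Pθ θ))
    (h₁ h₂ : ℝ → ℝ)
    (hh₁ : ∀ᵐ θ ∂(P.map Θ), h₁ θ = ∫ ω, (N ω : ℝ) ∂(Pθ θ))
    (hh₂ : ∀ᵐ θ ∂(P.map Θ), h₂ θ = ∫ ω, X₁ ω ∂(Pθ θ))
    (hindep : ∀ᵐ θ ∂(P.map Θ),
      Indep (MeasurableSpace.comap N inferInstance)
        (MeasurableSpace.comap X₁ inferInstance) (Pθ θ)) :
    (((MonotoneOn h₁ D ∧ MonotoneOn h₂ D) ∨ (AntitoneOn h₁ D ∧ AntitoneOn h₂ D)) →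
      (∫ ω, (N ω : ℝ) ∂P) * (∫ ω, X₁ ω ∂P) ≤ ∫ ω, (N ω : ℝ) * X₁ ω ∂P)
    ∧ (((MonotoneOn h₁ D ∧ AntitoneOn h₂ D) ∨ (AntitoneOn h₁ D ∧ MonotoneOn h₂ D)) →
      ∫ ω, (N ω : ℝ) * X₁ ω ∂P ≤ (∫ ω, (N ω : ℝ) ∂P) * (∫ ω, X₁ ω ∂P)) := by
  set μ : Measure ℝ := P.map Θ with hμdef
  haveI : IsProbabilityMeasure μ := Measure.isProbabilityMeasure_map hΘ.aemeasurable
  have hPθmeas : Measurable Pθ := Measure.measurable_of_measurable_coe _ hmeas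
  have hbind : P = μ.bind Pθ :=
    Measure.ext fun E hE => ((Measure.bind_apply hE hPθmeas.aemeasurable).trans (hint E hE)).symm
  have hNmeas : Measurable fun ω => (N ω : ℝ) :=
    (measurable_from_top (f := fun n : ℕ => (n : ℝ))).comp hN
  have hNnn : ∀ ω, (0 : ℝ) ≤ (N ω : ℝ) := fun ω => Nat.cast_nonneg _
  have hNXnn : ∀ ω, (0 : ℝ) ≤ (N ω : ℝ) * X₁ ω := fun ω => mul_nonneg (hNnn ω) (hX₁nn ω)
  -- independence as IndepFun, a.e.
  have hindep' : ∀ᵐ θ ∂μ, IndepFun (fun ω => (N ω : ℝ)) X₁ (Pθ θ) := by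
    filter_upwards [hindep] with θ hθ
    have hNX : IndepFun N X₁ (Pθ θ) := hθ
    exact hNX.comp (measurable_from_top (f := fun n : ℕ => (n : ℝ))) measurable_id
  -- three applications of the disintegration lemma
  have key₁ := aux_bind_integral μ Pθ hPθmeas P hbind _ hNmeas hNnn hNint h₁
    (by filter_upwards [hNθint, hh₁] with θ ha hb using ⟨ha, hb⟩)
  have key₂ := aux_bind_integral μ Pθ hPθmeas P hbind X₁ hX₁ hX₁nn hXint h₂
    (by filter_upwards [hXθint, hh₂] with θ ha hb using ⟨ha, hb⟩)
  have key₃ := aux_bind_integral μ Pθ hPθmeas P hbind (fun ω => (N ω : ℝ) * X₁ ω) (hNmeas.mul hX₁) hNXnn hNXint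
    (fun θ => h₁ θ * h₂ θ) (by
      filter_upwards [hindep', hNθint, hXθint, hh₁, hh₂] with θ hi hiN hiX e₁ e₂
      refine ⟨hi.integrable_mul hiN hiX, ?_⟩
      rw [e₁, e₂]
      exact (hi.integral_fun_mul_eq_mul_integral hiN.aestronglyMeasurable hiX.aestronglyMeasurable).symm)
  -- μ is concentrated on D
  have hDnull : μ Dᶜ = 0 := by
    rw [hμdef, Measure.map_apply hΘ hD.compl]
    have : Θ ⁻¹' Dᶜ = ∅ := by
      ext ω; simp [hΘD ω]
    simp [this]
  constructor
  · rintro (⟨hm₁, hm₂⟩ | ⟨hm₁, hm₂⟩) <;>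
    · rw [← key₁.2, ← key₂.2, ← key₃.2]
      refine aux_chebyshev μ D hDnull h₁ h₂ key₁.1 key₂.1 key₃.1 fun x hx y hy => ?_
      rcases le_total x y with hxy | hxy
      · have := hm₁ hx hy hxy; have := hm₂ hx hy hxy; nlinarith
      · have := hm₁ hy hx hxy; have := hm₂ hy hx hxy; nlinarith
  · rintro (⟨hm₁, hm₂⟩ | ⟨hm₁, hm₂⟩) <;>
    · rw [← key₁.2, ← key₂.2, ← key₃.2]
      have hneg : Integrable (fun θ => h₁ θ * -(h₂ θ)) μ :=
        key₃.1.neg.congr (Filter.Eventually.of_forall fun θ => by simp [mul_neg])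
      have hcheb := aux_chebyshev μ D hDnull h₁ (fun θ => -(h₂ θ)) key₁.1 key₂.1.neg hneg
        (fun x hx y hy => ?_)
      · rw [integral_neg] at hcheb
        have : ∫ θ, h₁ θ * -(h₂ θ) ∂μ = -∫ θ, h₁ θ * h₂ θ ∂μ := by
          rw [← integral_neg]; congr 1; ext θ; ring
        rw [this] at hcheb
        linarith
      · rcases le_total x y with hxy | hxy
        · have := hm₁ hx hy hxy; have := hm₂ hx hy hxy; nlinarith
        · have := hm₁ hy hx hxy; have := hm₂ hy hx hxy; nlinarith
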